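/- Let S be a nonempty finite set, let r_w ∈ (0, 1] for each w ∈ S, and set b := 1 − ∏_{w ∈ S}(1 − r_w). Let {G_w}_{w ∈ S} be independent geometric random variables on {1, 2, ...}, G_w with parameter r_w, and let B be a Bernoulli random variable with parameter b, independent of the family {G_w}. Then for every natural number β and every real number ℓ, E[ ℓ · B · min{ min_{w ∈ S} G_w, β } ] = ℓ · (1 − (∏_{w ∈ S}(1 − r_w))^β). In particular, for ℓ ∈ [0,1] this quantity is at most ℓ. -/

import Mathlib

open MeasureTheory ProbabilityTheory

/-- `Y` has a geometric distribution on `{1, 2, ...}` with parameter `p`: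
`P(Y = n) = p * (1 - p)^(n - 1)` for every integer `n ≥ 1`. -/
def IsGeometric {Ω : Type*} [MeasurableSpace Ω] (μ : Measure Ω) (Y : Ω → ℕ) (p : ℝ) : Prop :=
  ∀ n : ℕ, 1 ≤ n → (μ {ω | Y ω = n}).toReal = p * (1 - p) ^ (n - 1)

/-- `X` is a Bernoulli random variable with parameter `p`: it takes values in `{0, 1}`,
with `P(X = 1) = p` and `P(X = 0) = 1 - p`. -/
def IsBernoulli {Ω : Type*} [MeasurableSpace Ω] (μ : Measure Ω) (X : Ω → ℕ) (p : ℝ) : Prop :=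
  (∀ ω, X ω = 0 ∨ X ω = 1) ∧
    (μ {ω | X ω = 1}).toReal = p ∧ (μ {ω | X ω = 0}).toReal = 1 - p

/-- Tail probability of a geometric random variable. -/
lemma geom_tail {Ω : Type*} [MeasurableSpace Ω] (μ : Measure Ω) [IsProbabilityMeasure μ]
    (Y : Ω → ℕ) (hY : Measurable Y) (p : ℝ) (hp : p ∈ Set.Ioc (0 : ℝ) 1)
    (h : IsGeometric μ Y p) :
    ∀ n : ℕ, (μ {ω | n + 1 ≤ Y ω}).toReal = (1 - p) ^ n := by
  set q : ℝ := 1 - p with hq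
  have hq0 : 0 ≤ q := by simp [hq]; linarith [hp.2]
  have hq1 : q < 1 := by simp [hq]; linarith [hp.1]
  set T : ℕ → ℝ := fun n => (μ {ω | n ≤ Y ω}).toReal with hT
  have hmeas : ∀ n : ℕ, MeasurableSet {ω | n ≤ Y ω} := fun n =>
    hY measurableSet_Ici
  have step : ∀ n : ℕ, T (n + 1) = T (n + 2) + p * q ^ n := by
    intro n
    have hsplit : {ω | n + 1 ≤ Y ω} = {ω | n + 2 ≤ Y ω} ∪ {ω | Y ω = n + 1} := by
      ext ω; simp only [Set.mem_setOf_eq, Set.mem_union]; omega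
    have hdisj : Disjoint {ω | n + 2 ≤ Y ω} {ω | Y ω = n + 1} := by
      rw [Set.disjoint_left]; intro ω h1 h2
      simp only [Set.mem_setOf_eq] at h1 h2; omega
    have hm2 : MeasurableSet {ω | Y ω = n + 1} := hY (measurableSet_singleton _)
    have hval : (μ {ω | Y ω = n + 1}).toReal = p * q ^ n := by
      have := h (n + 1) (by omega)
      simpa using this
    have hTe : T (n + 1) = T (n + 2) + (μ {ω | Y ω = n + 1}).toReal := by
      simp only [hT, hsplit]
      rw [measure_union hdisj hm2, ENNReal.toReal_add (measure_ne_top μ _) (measure_ne_top μ _)]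
    rw [hTe, hval]
  have key : ∀ N : ℕ, T (N + 1) = T 1 - (1 - q ^ N) := by
    intro N
    induction N with
    | zero => simp
    | succ N ih =>
      have := step (N + 1)
      have hstepN := step N
      have hpq : p * q ^ N + q ^ (N + 1) = q ^ N := by
        rw [pow_succ, hq]; ring
      have : T (N + 2) = T (N + 1) - p * q ^ N := by linarith [step N]
      rw [this, ih]
      nlinarith [hpq]
  have hTnonneg : ∀ n, 0 ≤ T n := fun n => ENNReal.toReal_nonneg
  have hT1le : T 1 ≤ 1 := by
    have h1 : (μ {ω | 1 ≤ Y ω}) ≤ 1 := prob_le_one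
    simpa [hT] using ENNReal.toReal_mono (by norm_num) h1
  have hT1ge : 1 ≤ T 1 := by
    have hlim : Filter.Tendsto (fun N : ℕ => 1 - q ^ N) Filter.atTop (nhds 1) := by
      have := tendsto_pow_atTop_nhds_zero_of_lt_one hq0 hq1
      simpa using (tendsto_const_nhds (x := (1 : ℝ))).sub this
    refine le_of_tendsto' hlim (fun N => ?_)
    have := key N
    have := hTnonneg (N + 1)
    linarith
  have hT1 : T 1 = 1 := le_antisymm hT1le hT1ge
  intro n
  have := key n
  rw [hT1] at this
  have : T (n + 1) = q ^ n := by linarith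
  simpa [hT] using this

theorem stmt4 {Ω : Type*} [MeasurableSpace Ω] (μ : Measure Ω) [IsProbabilityMeasure μ]
    {S : Type*} [Fintype S] [Nonempty S]
    (r : S → ℝ) (hr : ∀ w, r w ∈ Set.Ioc (0 : ℝ) 1)
    (b : ℝ) (hb : b = 1 - ∏ w, (1 - r w))
    (G : S → Ω → ℕ) (hGmeas : ∀ w, Measurable (G w))
    (hgeom : ∀ w, IsGeometric μ (G w) (r w))
    (B : Ω → ℕ) (hBmeas : Measurable B) (hber : IsBernoulli μ B b)
    (hind : iIndepFun
      (fun o : Option S => Option.elim o B G) μ)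
    (β : ℕ) (ℓ : ℝ) :
    (∫ ω, ℓ * (B ω : ℝ) *
        (min (Finset.univ.inf' Finset.univ_nonempty (fun w => G w ω)) β : ℝ) ∂μ
      = ℓ * (1 - (∏ w, (1 - r w)) ^ β)) ∧
    (ℓ ∈ Set.Icc (0 : ℝ) 1 →
      ∫ ω, ℓ * (B ω : ℝ) *
          (min (Finset.univ.inf' Finset.univ_nonempty (fun w => G w ω)) β : ℝ) ∂μ ≤ ℓ) := by
  classical
  set q : ℝ := ∏ w, (1 - r w) with hqdef
  have hfac0 : ∀ w, 0 ≤ 1 - r w := fun w => by linarith [(hr w).2]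
  have hfac1 : ∀ w, 1 - r w < 1 := fun w => by linarith [(hr w).1]
  have hq0 : 0 ≤ q := Finset.prod_nonneg fun w _ => hfac0 w
  have hq1 : q < 1 := by
    obtain ⟨w0⟩ := (inferInstance : Nonempty S)
    have hsplit := (Finset.mul_prod_erase Finset.univ (fun w => 1 - r w)
      (Finset.mem_univ w0)).symm
    have hrest : ∏ w ∈ Finset.univ.erase w0, (1 - r w) ≤ 1 :=
      Finset.prod_le_one (fun w _ => hfac0 w) (fun w _ => (hfac1 w).le)
    have hrest0 : 0 ≤ ∏ w ∈ Finset.univ.erase w0, (1 - r w) :=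
      Finset.prod_nonneg fun w _ => hfac0 w
    calc q = (1 - r w0) * ∏ w ∈ Finset.univ.erase w0, (1 - r w) := hsplit
      _ ≤ (1 - r w0) * 1 := mul_le_mul_of_nonneg_left hrest (hfac0 w0)
      _ < 1 := by linarith [hfac1 w0]
  -- the events
  set A : ℕ → Set Ω := fun n => {ω | B ω = 1} ∩ ⋂ w, {ω | n + 1 ≤ G w ω} with hAdef
  have hAmeas : ∀ n, MeasurableSet (A n) := fun n =>
    (hBmeas (measurableSet_singleton 1)).inter
      (MeasurableSet.iInter fun w => hGmeas w measurableSet_Ici)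
  have hA : ∀ n : ℕ, (μ (A n)).toReal = b * q ^ n := by
    intro n
    classical
    set sets : Option S → Set ℕ := fun o => Option.elim o {1} (fun _ => Set.Ici (n + 1))
      with hsets
    have hsm : ∀ o : Option S, o ∈ (Finset.univ : Finset (Option S)) →
        MeasurableSet (sets o) := by
      rintro (_ | w) _
      · exact measurableSet_singleton 1
      · exact measurableSet_Ici
    have hkey := hind.measure_inter_preimage_eq_mul Finset.univ hsm
    have hsetEq : (⋂ o ∈ (Finset.univ : Finset (Option S)),
        (Option.elim o B G) ⁻¹' sets o) = A n := by
      ext ω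
      simp only [Set.mem_iInter, Finset.mem_univ, forall_true_left, Option.forall,
        hAdef, Set.mem_inter_iff, Set.mem_setOf_eq, hsets, Option.elim,
        Set.mem_preimage, Set.mem_singleton_iff, Set.mem_Ici]
    rw [hsetEq] at hkey
    rw [hkey, Fintype.prod_option]
    rw [ENNReal.toReal_mul, ENNReal.toReal_prod]
    have hB1 : ((μ (B ⁻¹' sets none)).toReal) = b := by
      have := hber.2.1
      simpa [hsets, Set.preimage, Set.mem_singleton_iff] using this
    have hGw : ∀ w : S, (μ (G w ⁻¹' sets (some w))).toReal = (1 - r w) ^ n := by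
      intro w
      have := geom_tail μ (G w) (hGmeas w) (r w) (hr w) (hgeom w) n
      simpa [hsets, Set.preimage, Set.mem_Ici] using this
    simp only [Option.elim] at hB1 hGw ⊢
    rw [hB1]
    rw [Finset.prod_congr rfl (fun w _ => hGw w), ← Finset.prod_pow]
  -- pointwise rewriting of the integrand
  have hpt : ∀ ω, ℓ * (B ω : ℝ) *
      (min (Finset.univ.inf' Finset.univ_nonempty (fun w => G w ω)) β : ℝ)
      = ℓ * ∑ n ∈ Finset.range β, (A n).indicator (fun _ => (1 : ℝ)) ω := by
    intro ω
    classical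
    set m : ℕ := Finset.univ.inf' Finset.univ_nonempty (fun w => G w ω) with hm
    have hmem : ∀ n : ℕ, ω ∈ A n ↔ (B ω = 1 ∧ n + 1 ≤ m) := by
      intro n
      simp only [hAdef, Set.mem_inter_iff, Set.mem_setOf_eq, Set.mem_iInter]
      constructor
      · rintro ⟨h1, h2⟩
        exact ⟨h1, Finset.le_inf' _ _ fun w _ => h2 w⟩
      · rintro ⟨h1, h2⟩
        refine ⟨h1, fun w => le_trans h2 ?_⟩
        exact Finset.inf'_le _ (Finset.mem_univ w)
    rcases hber.1 ω with h0 | h1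
    · have : ∀ n, (A n).indicator (fun _ => (1 : ℝ)) ω = 0 := by
        intro n
        apply Set.indicator_of_notMem
        rw [hmem]; simp [h0]
      simp [h0, this]
    · have hind' : ∀ n, (A n).indicator (fun _ => (1 : ℝ)) ω
          = if n + 1 ≤ m then (1 : ℝ) else 0 := by
        intro n
        by_cases h : n + 1 ≤ m
        · rw [Set.indicator_of_mem ((hmem n).2 ⟨h1, h⟩)]; simp [h]
        · rw [Set.indicator_of_notMem (fun hc => h ((hmem n).1 hc).2)]; simp [h]
      have hfilter : (Finset.range β).filter (fun n => n + 1 ≤ m)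
          = Finset.range (min m β) := by
        ext k
        simp only [Finset.mem_filter, Finset.mem_range, Nat.lt_min]
        omega
      have hsum : ∑ n ∈ Finset.range β, (if n + 1 ≤ m then (1 : ℝ) else 0)
          = ((min m β : ℕ) : ℝ) := by
        rw [Finset.sum_boole, hfilter, Finset.card_range]
      simp only [hind', hsum]
      have hcast : (Finset.univ.inf' Finset.univ_nonempty fun w => ((G w ω : ℕ) : ℝ))
          = (m : ℝ) := by
        rw [hm]
        exact (Finset.apply_inf'_eq_inf'_comp Finset.univ_nonempty (fun x : ℕ => (x : ℝ))
          (fun x y => by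
            show ((x ⊓ y : ℕ) : ℝ) = (x : ℝ) ⊓ (y : ℝ)
            norm_cast)).symm
      rw [hcast, h1]
      push_cast
      ring
  have hintg : ∀ n : ℕ, Integrable ((A n).indicator (fun _ => (1 : ℝ))) μ :=
    fun n => (integrable_const (1 : ℝ)).indicator (hAmeas n)
  have hmain : ∫ ω, ℓ * (B ω : ℝ) *
      (min (Finset.univ.inf' Finset.univ_nonempty (fun w => G w ω)) β : ℝ) ∂μ
      = ℓ * (1 - q ^ β) := by
    rw [integral_congr_ae (Filter.Eventually.of_forall hpt)]
    rw [integral_const_mul]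
    rw [integral_finset_sum _ (fun n _ => hintg n)]
    have : ∀ n ∈ Finset.range β,
        (∫ ω, (A n).indicator (fun _ => (1 : ℝ)) ω ∂μ) = b * q ^ n := by
      intro n _
      rw [integral_indicator_const _ (hAmeas n)]
      simp [Measure.real, hA n]
    rw [Finset.sum_congr rfl this]
    rw [← Finset.mul_sum, geom_sum_eq hq1.ne]
    have hqne : q - 1 ≠ 0 := by intro h; apply hq1.ne; linarith
    rw [hb]
    field_simp
    ring
  refine ⟨hmain, fun hℓ => ?_⟩
  rw [hmain]
  have h1 : (0:ℝ) ≤ q ^ β := pow_nonneg hq0 β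
  have h2 : q ^ β ≤ 1 := pow_le_one₀ hq0 hq1.le
  nlinarith [hℓ.1, hℓ.2]
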